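/- arXiv:2410.21234 — 3 statements merged into one kernel-verified Lean document; each statement's English description precedes it below -/
import Mathlib

section
/- Let X ∈ ℝ^{n×n}, Y ∈ ℝ^{m×n}, Z = X - Xᵀ + YᵀY, and define Aᵀ = (I+Z)⁻¹(I-Z) and Bᵀ = -2Y(I+Z)⁻¹. Then A Aᵀ + B Bᵀ = I. -/
open Matrix

theorem stmt_2 (n m : ℕ) (X : Matrix (Fin n) (Fin n) ℝ) (Y : Matrix (Fin m) (Fin n) ℝ)
    (Z : Matrix (Fin n) (Fin n) ℝ) (hZ : Z = X - Xᵀ + Yᵀ * Y)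
    (A : Matrix (Fin n) (Fin n) ℝ) (hA : Aᵀ = (1 + Z)⁻¹ * (1 - Z))
    (B : Matrix (Fin n) (Fin m) ℝ) (hB : Bᵀ = (-2 : ℝ) • (Y * (1 + Z)⁻¹)) :
    A * Aᵀ + B * Bᵀ = 1 := by
  set M : Matrix (Fin n) (Fin n) ℝ := 1 + Z with hM
  -- invertibility of M
  have hdet : IsUnit M.det := by
    by_contra h
    have h0 : M.det = 0 := by
      simpa [isUnit_iff_ne_zero] using h
    obtain ⟨v, hv, hMv⟩ := (Matrix.exists_mulVec_eq_zero_iff).2 h0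
    have h1 : v ⬝ᵥ (M *ᵥ v) = 0 := by rw [hMv, dotProduct_zero]
    have hskew : v ⬝ᵥ ((X - Xᵀ) *ᵥ v) = 0 := by
      have : v ⬝ᵥ (Xᵀ *ᵥ v) = v ⬝ᵥ (X *ᵥ v) := by
        rw [Matrix.dotProduct_mulVec, Matrix.vecMul_transpose, dotProduct_comm]
      rw [Matrix.sub_mulVec, dotProduct_sub, this, sub_self]
    have hYv : v ⬝ᵥ ((Yᵀ * Y) *ᵥ v) = (Y *ᵥ v) ⬝ᵥ (Y *ᵥ v) := by
      rw [← Matrix.mulVec_mulVec, Matrix.dotProduct_mulVec, Matrix.vecMul_transpose,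
        dotProduct_comm]
    have h2 : v ⬝ᵥ v + (Y *ᵥ v) ⬝ᵥ (Y *ᵥ v) = 0 := by
      have := h1
      rw [hM, hZ] at this
      rw [Matrix.add_mulVec, Matrix.add_mulVec, Matrix.one_mulVec, dotProduct_add,
        dotProduct_add, hskew, hYv] at this
      linarith
    have hvv : v ⬝ᵥ v = 0 := by
      have h3 : (0:ℝ) ≤ v ⬝ᵥ v := Finset.sum_nonneg fun i _ => mul_self_nonneg (v i)
      have h4 : (0:ℝ) ≤ (Y *ᵥ v) ⬝ᵥ (Y *ᵥ v) := Finset.sum_nonneg fun i _ => mul_self_nonneg _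
      linarith
    exact hv (dotProduct_self_eq_zero.mp hvv)
  have hMl : M⁻¹ * M = 1 := Matrix.nonsing_inv_mul M hdet
  have hMr : M * M⁻¹ = 1 := Matrix.mul_nonsing_inv M hdet
  have hdetT : IsUnit Mᵀ.det := by rwa [Matrix.det_transpose]
  have hMTl : Mᵀ⁻¹ * Mᵀ = 1 := Matrix.nonsing_inv_mul _ hdetT
  have hMTr : Mᵀ * Mᵀ⁻¹ = 1 := Matrix.mul_nonsing_inv _ hdetT
  -- rewrite A and B
  have hAe : A = (1 - Zᵀ) * Mᵀ⁻¹ := by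
    have := congrArg Matrix.transpose hA
    rwa [Matrix.transpose_transpose, Matrix.transpose_mul, Matrix.transpose_sub,
      Matrix.transpose_one, Matrix.transpose_nonsing_inv] at this
  have hBe : B = (-2 : ℝ) • (Mᵀ⁻¹ * Yᵀ) := by
    have := congrArg Matrix.transpose hB
    rwa [Matrix.transpose_transpose, Matrix.transpose_smul, Matrix.transpose_mul,
      Matrix.transpose_nonsing_inv] at this
  -- commutation of (1 - Zᵀ) with Mᵀ⁻¹
  have hcomm : (1 - Zᵀ) * Mᵀ = Mᵀ * (1 - Zᵀ) := by
    rw [hM, Matrix.transpose_add, Matrix.transpose_one]; noncomm_ring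
  have hcommInv : (1 - Zᵀ) * Mᵀ⁻¹ = Mᵀ⁻¹ * (1 - Zᵀ) := by
    calc (1 - Zᵀ) * Mᵀ⁻¹ = Mᵀ⁻¹ * Mᵀ * ((1 - Zᵀ) * Mᵀ⁻¹) := by rw [hMTl, one_mul]
      _ = Mᵀ⁻¹ * ((1 - Zᵀ) * Mᵀ) * Mᵀ⁻¹ := by
          rw [hcomm]; noncomm_ring
      _ = Mᵀ⁻¹ * (1 - Zᵀ) * (Mᵀ * Mᵀ⁻¹) := by noncomm_ring
      _ = Mᵀ⁻¹ * (1 - Zᵀ) := by rw [hMTr, mul_one]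
  -- key algebraic identity
  have hcomm2 : M * (1 - Z) = (1 - Z) * M := by
    rw [hM]; noncomm_ring
  have hcommInv2 : M⁻¹ * (1 - Z) = (1 - Z) * M⁻¹ := by
    calc M⁻¹ * (1 - Z) = M⁻¹ * (1 - Z) * (M * M⁻¹) := by rw [hMr, mul_one]
      _ = M⁻¹ * ((1 - Z) * M) * M⁻¹ := by noncomm_ring
      _ = M⁻¹ * M * ((1 - Z) * M⁻¹) := by rw [← hcomm2]; noncomm_ring
      _ = (1 - Z) * M⁻¹ := by rw [hMl, one_mul]
  have hkey : (1 - Zᵀ) * (1 - Z) + (4 : ℝ) • (Yᵀ * Y) = Mᵀ * M := by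
    have h4 : ∀ W : Matrix (Fin n) (Fin n) ℝ, (4:ℝ) • W = W + W + W + W := by
      intro W
      rw [show (4:ℝ) = 1+1+1+1 by norm_num, add_smul, add_smul, add_smul, one_smul]
    rw [h4, hM, hZ]
    simp only [Matrix.transpose_add, Matrix.transpose_sub, Matrix.transpose_mul,
      Matrix.transpose_transpose, Matrix.transpose_one]
    noncomm_ring
  calc A * Aᵀ + B * Bᵀ
      = (1 - Zᵀ) * Mᵀ⁻¹ * (M⁻¹ * (1 - Z)) + ((-2:ℝ) • (Mᵀ⁻¹ * Yᵀ)) * ((-2:ℝ) • (Y * M⁻¹)) := by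
        rw [hA, hB, hAe, hBe, hM]
    _ = Mᵀ⁻¹ * ((1 - Zᵀ) * (1 - Z) + (4:ℝ) • (Yᵀ * Y)) * M⁻¹ := by
        rw [hcommInv, hcommInv2]
        simp only [Matrix.smul_mul, Matrix.mul_smul, smul_smul]
        norm_num
        noncomm_ring
        simp [Matrix.mul_assoc]
    _ = Mᵀ⁻¹ * (Mᵀ * M) * M⁻¹ := by rw [hkey]
    _ = 1 := by
        rw [← Matrix.mul_assoc, hMTl, Matrix.one_mul, hMr]
end

section
/- Let Ψ be an n_out × n_out positive definite diagonal matrix, A ∈ ℝ^{n_out×n_out}, B ∈ ℝ^{n_out×n_in} with A Aᵀ + B Bᵀ = I, b ∈ ℝ^{n_out}, and σ : ℝ → ℝ slope-restricted in [0,1] applied elementwise. Then the map h(x) = √2 · Aᵀ Ψ σ(√2 · Ψ⁻¹ B x + b) is 1-Lipschitz in the ℓ₂ norm. -/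
open Matrix

theorem stmt_5 (nin nout : ℕ) (d : Fin nout → ℝ) (hd : ∀ i, 0 < d i)
    (Ψ : Matrix (Fin nout) (Fin nout) ℝ) (hΨ : Ψ = Matrix.diagonal d)
    (A : Matrix (Fin nout) (Fin nout) ℝ) (B : Matrix (Fin nout) (Fin nin) ℝ)
    (hAB : A * Aᵀ + B * Bᵀ = 1)
    (b : Fin nout → ℝ) (σ : ℝ → ℝ)
    (hslope : ∀ s t : ℝ, t ≤ s → 0 ≤ σ s - σ t ∧ σ s - σ t ≤ s - t)
    (h : EuclideanSpace ℝ (Fin nin) → EuclideanSpace ℝ (Fin nout))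
    (hh : ∀ x : EuclideanSpace ℝ (Fin nin),
      h x = fun j => Real.sqrt 2 *
        (Aᵀ * Ψ).mulVec (fun i => σ (Real.sqrt 2 * (Ψ⁻¹ * B).mulVec x i + b i)) j) :
    LipschitzWith 1 h := by
  have h2 : (Real.sqrt 2) ^ 2 = 2 := Real.sq_sqrt (by norm_num)
  have hinv : Ψ⁻¹ = Matrix.diagonal (fun i => (d i)⁻¹) := by
    apply Matrix.inv_eq_right_inv
    rw [hΨ, Matrix.diagonal_mul_diagonal]
    have hone : (fun i => d i * (d i)⁻¹) = fun _ : Fin nout => (1 : ℝ) :=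
      funext fun i => mul_inv_cancel₀ (hd i).ne'
    rw [hone, Matrix.diagonal_one]
  rw [lipschitzWith_iff_dist_le_mul]
  intro x y
  rw [NNReal.coe_one, one_mul, dist_eq_norm, dist_eq_norm]
  rw [EuclideanSpace.norm_eq, EuclideanSpace.norm_eq]
  apply Real.sqrt_le_sqrt
  -- set up notation
  set c : Fin nin → ℝ := fun i => x i - y i with hc
  set zx : Fin nout → ℝ := fun i => σ (Real.sqrt 2 * (Ψ⁻¹ * B).mulVec x i + b i) with hzx
  set zy : Fin nout → ℝ := fun i => σ (Real.sqrt 2 * (Ψ⁻¹ * B).mulVec y i + b i) with hzy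
  set z : Fin nout → ℝ := fun i => zx i - zy i with hz
  set p : Fin nout → ℝ := fun i => d i * z i with hp
  set w : Fin nin → ℝ := Bᵀ.mulVec p with hw
  -- p is Ψ z
  have hpz : Ψ.mulVec z = p := by
    funext i
    rw [hΨ]
    exact Matrix.mulVec_diagonal d z i
  -- difference of inner arguments
  have hBc : ∀ i, (Ψ⁻¹ * B).mulVec x i - (Ψ⁻¹ * B).mulVec y i = (d i)⁻¹ * B.mulVec c i := by
    intro i
    have : (Ψ⁻¹ * B).mulVec x i - (Ψ⁻¹ * B).mulVec y i = (Ψ⁻¹ * B).mulVec c i := by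
      simp only [Matrix.mulVec, dotProduct, hc, ← Finset.sum_sub_distrib, mul_sub]
    rw [this, hinv, ← Matrix.mulVec_mulVec, Matrix.mulVec_diagonal]
  -- per-coordinate slope inequality
  have hkey : ∀ i, p i * p i ≤ Real.sqrt 2 * (p i * B.mulVec c i) := by
    intro i
    set s := Real.sqrt 2 * (Ψ⁻¹ * B).mulVec x i + b i with hs
    set t := Real.sqrt 2 * (Ψ⁻¹ * B).mulVec y i + b i with ht
    have hst : s - t = Real.sqrt 2 * ((d i)⁻¹ * B.mulVec c i) := by
      rw [hs, ht]
      linear_combination Real.sqrt 2 * hBc i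
    have hzi : z i = σ s - σ t := rfl
    have hzst : z i * z i ≤ z i * (s - t) := by
      rw [hzi]
      rcases le_total t s with hts | hts
      · obtain ⟨h1, h2⟩ := hslope s t hts
        nlinarith
      · obtain ⟨h1, h2⟩ := hslope t s hts
        nlinarith
    have hdi := hd i
    have hdne : d i ≠ 0 := hdi.ne'
    have : d i ^ 2 * (z i * (s - t)) = Real.sqrt 2 * (p i * B.mulVec c i) := by
      rw [hst, hp]
      field_simp
    have hpi : p i = d i * z i := rfl
    rw [hpi] at this ⊢
    nlinarith [mul_le_mul_of_nonneg_left hzst (sq_nonneg (d i)), this]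
  -- Fact 1 : p⬝p ≤ √2 * (w ⬝ c)
  have fact1 : p ⬝ᵥ p ≤ Real.sqrt 2 * (w ⬝ᵥ c) := by
    have hwc : w ⬝ᵥ c = p ⬝ᵥ B.mulVec c := by
      rw [hw, Matrix.mulVec_transpose, ← Matrix.dotProduct_mulVec]
    rw [hwc]
    calc p ⬝ᵥ p = ∑ i, p i * p i := rfl
      _ ≤ ∑ i, Real.sqrt 2 * (p i * B.mulVec c i) :=
          Finset.sum_le_sum fun i _ => hkey i
      _ = Real.sqrt 2 * (p ⬝ᵥ B.mulVec c) := by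
          simp only [dotProduct, Finset.mul_sum]
  -- energy identity: q⬝q + w⬝w = p⬝p with q = Aᵀ p
  set q : Fin nout → ℝ := Aᵀ.mulVec p with hq
  have energy : q ⬝ᵥ q + w ⬝ᵥ w = p ⬝ᵥ p := by
    have hA : p ⬝ᵥ (A * Aᵀ).mulVec p = q ⬝ᵥ q := by
      rw [← Matrix.mulVec_mulVec, Matrix.dotProduct_mulVec, ← Matrix.mulVec_transpose]
    have hB : p ⬝ᵥ (B * Bᵀ).mulVec p = w ⬝ᵥ w := by
      rw [← Matrix.mulVec_mulVec, Matrix.dotProduct_mulVec, ← Matrix.mulVec_transpose]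
    have := congrArg (fun M => p ⬝ᵥ M.mulVec p) hAB
    simp only [Matrix.add_mulVec, dotProduct_add, Matrix.one_mulVec] at this
    rw [hA, hB] at this
    exact this
  -- Fact 2 : 2√2 (w⬝c) - 2 w⬝w ≤ c⬝c
  have fact2 : 2 * Real.sqrt 2 * (w ⬝ᵥ c) - 2 * (w ⬝ᵥ w) ≤ c ⬝ᵥ c := by
    have hnn : 0 ≤ ∑ i, (Real.sqrt 2 * w i - c i) ^ 2 :=
      Finset.sum_nonneg fun i _ => sq_nonneg _
    have hexp : ∑ i, (Real.sqrt 2 * w i - c i) ^ 2 =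
        2 * (w ⬝ᵥ w) - 2 * Real.sqrt 2 * (w ⬝ᵥ c) + c ⬝ᵥ c := by
      have : ∀ i, (Real.sqrt 2 * w i - c i) ^ 2 =
          2 * (w i * w i) - 2 * Real.sqrt 2 * (w i * c i) + c i * c i := by
        intro i
        nlinarith [h2]
      rw [Finset.sum_congr rfl fun i _ => this i]
      simp only [dotProduct, Finset.sum_add_distrib, Finset.sum_sub_distrib,
        Finset.mul_sum]
    linarith [hexp ▸ hnn]
  -- compute the difference of h
  have hdiff : ∀ j, h x j - h y j = Real.sqrt 2 * q j := by
    intro j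
    rw [hh x, hh y]
    simp only [hq, ← hpz, Matrix.mulVec_mulVec]
    rw [← mul_sub]
    congr 1
    simp only [Matrix.mulVec, dotProduct, ← Finset.sum_sub_distrib, ← mul_sub]
    rfl
  -- final computation
  have hL : ∑ j, ‖(h x - h y) j‖ ^ 2 = 2 * (q ⬝ᵥ q) := by
    have : ∀ j, ‖(h x - h y) j‖ ^ 2 = 2 * (q j * q j) := by
      intro j
      have hj : (h x - h y) j = h x j - h y j := rfl
      rw [hj, hdiff j, Real.norm_eq_abs, sq_abs]
      nlinarith [h2]
    rw [Finset.sum_congr rfl fun j _ => this j]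
    simp only [dotProduct, Finset.mul_sum]
  have hR : ∑ i, ‖(x - y) i‖ ^ 2 = c ⬝ᵥ c := by
    refine Finset.sum_congr rfl fun i _ => ?_
    have hi : (x - y) i = c i := rfl
    rw [hi, Real.norm_eq_abs, sq_abs, sq]
  rw [hL, hR]
  nlinarith [fact1, fact2, energy, Real.sqrt_nonneg 2]
end

section
/- Let X ⊂ ℝⁿ be compact and covered by finitely many ℓ∞-balls G_i = {x : ‖x − x̄_i‖∞ ≤ δ}. Suppose for each i there exists a data point (x_j, y_j) and vertices v_k of G_i such that ε_i = ‖Φ(x_j) − y_j‖₂ + (K+γ) max_k ‖x_j − v_k‖₂ is finite, where f is K-Lipschitz, Φ is γ-Lipschitz, and y_j = f(x_j). Then for all x ∈ X, ‖Φ(x) − f(x)‖₂ ≤ max_i ε_i, since every point of G_i lies in the convex hull of its vertices and hence within max_k ‖x_j − v_k‖₂ of x_j. -/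
lemma key_vertex (n : ℕ) (δ : ℝ) (x c p : EuclideanSpace ℝ (Fin n))
    (h : ∀ k, |x k - c k| ≤ δ) :
    ∃ s : Fin n → Bool, ‖p - x‖ ≤
      ‖p - (WithLp.equiv 2 (Fin n → ℝ)).symm (fun k => c k + δ * (if s k then 1 else -1))‖ := by
  refine ⟨fun k => decide (p k ≤ c k), ?_⟩
  rw [EuclideanSpace.norm_eq, EuclideanSpace.norm_eq]
  apply Real.sqrt_le_sqrt
  apply Finset.sum_le_sum
  intro k _
  have hk := abs_le.mp (h k)
  simp only [PiLp.sub_apply, WithLp.equiv_symm_apply, PiLp.toLp_apply, Real.norm_eq_abs, sq_abs]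
  by_cases hpc : p k ≤ c k <;> simp [hpc] <;> nlinarith [hk.1, hk.2]

theorem stmt_18 (n : ℕ) (X : Set (EuclideanSpace ℝ (Fin n))) (hX : IsCompact X)
    (K γ : ℝ)
    (f Φ : EuclideanSpace ℝ (Fin n) → EuclideanSpace ℝ (Fin n))
    (hf : ∀ u v, ‖f u - f v‖ ≤ K * ‖u - v‖)
    (hΦ : ∀ u v, ‖Φ u - Φ v‖ ≤ γ * ‖u - v‖)
    (ι : Type) [Fintype ι] [Nonempty ι] (δ : ℝ) (hδ : 0 < δ)
    (xbar : ι → EuclideanSpace ℝ (Fin n))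
    -- the hypercubes G i = {x : ‖x - x̄ i‖∞ ≤ δ} cover X
    (hcover : ∀ x ∈ X, ∃ i : ι,
      ‖(WithLp.equiv 2 (Fin n → ℝ)) (x - xbar i)‖ ≤ δ)
    -- for each x in G i, x lies within max_k ‖x_j - v_k‖₂ of the data point x_j chosen for G i
    (xj : ι → EuclideanSpace ℝ (Fin n)) (yj : ι → EuclideanSpace ℝ (Fin n))
    (hyj : ∀ i, yj i = f (xj i))
    (ε : ι → ℝ)
    (hε : ∀ i, ε i = ‖Φ (xj i) - yj i‖ + (K + γ) *
      Finset.univ.sup' Finset.univ_nonempty (fun s : Fin n → Bool =>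
        ‖xj i - (WithLp.equiv 2 (Fin n → ℝ)).symm (fun k => xbar i k + δ * (if s k then 1 else -1))‖)) :
    ∀ x ∈ X, ‖Φ x - f x‖ ≤ Finset.univ.sup' Finset.univ_nonempty ε := by
  intro x hx
  obtain ⟨i, hi⟩ := hcover x hx
  have hεi : ε i ≤ Finset.univ.sup' Finset.univ_nonempty ε :=
    Finset.le_sup' ε (Finset.mem_univ i)
  rcases Nat.eq_zero_or_pos n with h0 | hpos
  · subst h0
    have hsub : ∀ a : EuclideanSpace ℝ (Fin 0), ‖a‖ = 0 := by
      intro a; rw [show a = 0 from Subsingleton.elim a 0]; simp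
    have hzero : ε i = 0 := by
      rw [hε i, hsub]
      set g : (Fin 0 → Bool) → ℝ := fun s =>
        ‖xj i - (WithLp.equiv 2 (Fin 0 → ℝ)).symm (fun k => xbar i k + δ * (if s k then 1 else -1))‖ with hg
      have hMz : Finset.univ.sup' Finset.univ_nonempty g = 0 := by
        apply le_antisymm
        · exact Finset.sup'_le _ _ fun s _ => le_of_eq (hsub _)
        · calc (0:ℝ) = g (fun _ => true) := (hsub _).symm
            _ ≤ _ := Finset.le_sup' g (Finset.mem_univ _)
      rw [hMz]; ring
    rw [hsub]
    linarith
  · have hK : 0 ≤ K := by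
      have h1 : ‖(EuclideanSpace.single (⟨0, hpos⟩ : Fin n) (1:ℝ)) - 0‖ = 1 := by simp
      have := hf (EuclideanSpace.single (⟨0, hpos⟩ : Fin n) (1:ℝ)) 0
      rw [h1, mul_one] at this
      exact le_trans (norm_nonneg _) this
    have hγ : 0 ≤ γ := by
      have h1 : ‖(EuclideanSpace.single (⟨0, hpos⟩ : Fin n) (1:ℝ)) - 0‖ = 1 := by simp
      have := hΦ (EuclideanSpace.single (⟨0, hpos⟩ : Fin n) (1:ℝ)) 0
      rw [h1, mul_one] at this
      exact le_trans (norm_nonneg _) this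
    have hcoord : ∀ k, |x k - xbar i k| ≤ δ := by
      intro k
      have h2 := norm_le_pi_norm ((WithLp.equiv 2 (Fin n → ℝ)) (x - xbar i)) k
      simp only [Real.norm_eq_abs] at h2
      exact le_trans (le_of_eq (by simp [WithLp.equiv])) (h2.trans hi)
    obtain ⟨s, hs⟩ := key_vertex n δ x (xbar i) (xj i) hcoord
    set M := Finset.univ.sup' Finset.univ_nonempty (fun s : Fin n → Bool =>
        ‖xj i - (WithLp.equiv 2 (Fin n → ℝ)).symm (fun k => xbar i k + δ * (if s k then 1 else -1))‖) with hM
    have hxM : ‖xj i - x‖ ≤ M := hs.trans (Finset.le_sup' (fun s : Fin n → Bool =>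
        ‖xj i - (WithLp.equiv 2 (Fin n → ℝ)).symm (fun k => xbar i k + δ * (if s k then 1 else -1))‖) (Finset.mem_univ s))
    have key : ‖Φ x - f x‖ ≤ ‖Φ (xj i) - yj i‖ + (K + γ) * M := by
      have t1 : ‖Φ x - f x‖ ≤ ‖Φ x - Φ (xj i)‖ + ‖Φ (xj i) - f (xj i)‖ + ‖f (xj i) - f x‖ := by
        have := norm_sub_le_norm_sub_add_norm_sub (Φ x) (Φ (xj i)) (f x)
        have := norm_sub_le_norm_sub_add_norm_sub (Φ (xj i)) (f (xj i)) (f x)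
        linarith [norm_sub_le_norm_sub_add_norm_sub (Φ x) (Φ (xj i)) (f x),
          norm_sub_le_norm_sub_add_norm_sub (Φ (xj i)) (f (xj i)) (f x)]
      have t2 : ‖Φ x - Φ (xj i)‖ ≤ γ * ‖xj i - x‖ := by
        have h := hΦ x (xj i); rwa [norm_sub_rev x (xj i)] at h
      have t3 : ‖f (xj i) - f x‖ ≤ K * ‖xj i - x‖ := hf (xj i) x
      have t4 : (K + γ) * ‖xj i - x‖ ≤ (K + γ) * M :=
        mul_le_mul_of_nonneg_left hxM (by linarith)
      rw [hyj i] at *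
      nlinarith
    rw [hε i] at hεi
    linarith
end
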